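/- For nonzero polynomials a, b ∈ ℂ[s], define a ∙ b as the monic generator of the ideal ⟨a(s), b(t)⟩ ∩ ℂ[s+t] (written as a polynomial in u = s+t). Then for any nonzero a, b, q ∈ ℂ[s], lcm(a,b) ∙ q = lcm(a ∙ q, b ∙ q). -/

import Mathlib

open Polynomial in
/-- Cancellation: if `C c * w = M * v` with `c ≠ 0` and `M` monic, then `M ∣ w`. -/
lemma stmt4AuxCancel {R : Type*} [CommRing R] [IsDomain R] {M w v : R[X]} {c : R} (hc : c ≠ 0)
    (hM : M.Monic) (h : Polynomial.C c * w = M * v) : M ∣ w := by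
  rw [← Polynomial.modByMonic_eq_zero_iff_dvd hM]
  have key : C c * (w %ₘ M) = M * (v - C c * (w /ₘ M)) := by
    rw [mul_sub, ← h]
    nth_rewrite 2 [← Polynomial.modByMonic_add_div w M]
    ring
  by_cases h0 : v - C c * (w /ₘ M) = 0
  · rw [h0, mul_zero, mul_eq_zero] at key
    rcases key with h1 | h1
    · exact absurd (Polynomial.C_eq_zero.mp h1) hc
    · exact h1
  · exfalso
    have h1 : (C c * (w %ₘ M)).degree < M.degree := by
      rw [Polynomial.degree_mul, Polynomial.degree_C hc, zero_add]
      exact Polynomial.degree_modByMonic_lt w hM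
    rw [key, Polynomial.degree_mul] at h1
    have h2 : (0 : WithBot ℕ) ≤ (v - C c * (w /ₘ M)).degree :=
      Polynomial.zero_le_degree_iff.mpr h0
    have := add_le_add_left h2 M.degree
    rw [zero_add, add_comm] at this
    exact absurd (lt_of_le_of_lt this h1) (lt_irrefl _)

open Polynomial in
/-- The key ideal-theoretic fact in `(ℂ[X])[Y]`. -/
lemma stmt4AuxKey (a b q : Polynomial ℂ) (ha : a ≠ 0) (hq : q ≠ 0)
    (f : Polynomial (Polynomial ℂ))
    (h2 : f ∈ Ideal.span {Polynomial.C a, q.map Polynomial.C})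
    (h3 : f ∈ Ideal.span {Polynomial.C b, q.map Polynomial.C}) :
    f ∈ Ideal.span {Polynomial.C (lcm a b), q.map Polynomial.C} := by
  classical
  obtain ⟨x2, y2, hf2⟩ := Ideal.mem_span_pair.mp h2
  obtain ⟨x3, y3, hf3⟩ := Ideal.mem_span_pair.mp h3
  obtain ⟨u, v, huv⟩ := exists_gcd_eq_mul_add_mul a b
  obtain ⟨c, hc⟩ := gcd_mul_lcm a b
  set Q := q.map (Polynomial.C : ℂ →+* Polynomial ℂ) with hQ
  set d := gcd a b with hd
  set L := lcm a b with hL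
  have hd0 : d ≠ 0 := fun h => ha ((gcd_eq_zero_iff a b).mp h).1
  set W : Polynomial (Polynomial ℂ) := C L * (C (c : Polynomial ℂ) * (C u * x3 + C v * x2)) with hW
  have heq : C d * (f - W) = Q * (C (a*u) * y3 + C (b*v) * y2) := by
    have hc' : C d * C L * C (c : Polynomial ℂ) = C a * C b := by
      rw [← Polynomial.C_mul, ← Polynomial.C_mul, ← Polynomial.C_mul, hc]
    have huv' : (C d : Polynomial (Polynomial ℂ)) = C a * C u + C b * C v := by
      rw [← Polynomial.C_mul, ← Polynomial.C_mul, ← Polynomial.C_add, huv]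
    have hca : (C (a*u) : Polynomial (Polynomial ℂ)) = C a * C u := by rw [Polynomial.C_mul]
    have hcb : (C (b*v) : Polynomial (Polynomial ℂ)) = C b * C v := by rw [Polynomial.C_mul]
    linear_combination f * huv' - (C a * C u) * hf3 - (C b * C v) * hf2
      - (C u * x3 + C v * x2) * hc' - Q * y3 * hca - Q * y2 * hcb
  set lc := q.leadingCoeff with hlc
  have hlc0 : lc ≠ 0 := Polynomial.leadingCoeff_ne_zero.mpr hq
  set M := (q * Polynomial.C lc⁻¹).map (Polynomial.C : ℂ →+* Polynomial ℂ) with hM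
  have hMm : M.Monic := (Polynomial.monic_mul_leadingCoeff_inv hq).map _
  have hQM : Q = M * C (Polynomial.C lc) := by
    rw [hM, Polynomial.map_mul, Polynomial.map_C, mul_assoc, ← Polynomial.C_mul,
      ← Polynomial.C_mul, inv_mul_cancel₀ hlc0, Polynomial.C_1, Polynomial.C_1, mul_one]
  have heq' : C d * (f - W) = M * (C (Polynomial.C lc) * (C (a*u) * y3 + C (b*v) * y2)) := by
    rw [heq, hQM]; ring
  obtain ⟨t, ht⟩ := stmt4AuxCancel hd0 hMm heq'
  refine Ideal.mem_span_pair.mpr ⟨C (c : Polynomial ℂ) * (C u * x3 + C v * x2),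
    C (Polynomial.C lc⁻¹) * t, ?_⟩
  have h1 : (C (Polynomial.C lc) : Polynomial (Polynomial ℂ)) * C (Polynomial.C lc⁻¹) = 1 := by
    rw [← Polynomial.C_mul, ← Polynomial.C_mul, mul_inv_cancel₀ hlc0,
      Polynomial.C_1, Polynomial.C_1]
  have hQt : Q * (C (Polynomial.C lc⁻¹) * t) = f - W := by
    calc Q * (C (Polynomial.C lc⁻¹) * t)
        = (C (Polynomial.C lc) * C (Polynomial.C lc⁻¹)) * (M * t) := by rw [hQM]; ring
      _ = M * t := by rw [h1, one_mul]
      _ = f - W := ht.symm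
  linear_combination hQt


open MvPolynomial

/-- The algebra equivalence `MvPolynomial (Fin 1) ℂ ≃ₐ[ℂ] ℂ[X]`. -/
noncomputable def stmt4AuxE2 : MvPolynomial (Fin 1) ℂ ≃ₐ[ℂ] Polynomial ℂ :=
  (renameEquiv ℂ (Equiv.equivPUnit.{1} (Fin 1))).trans (pUnitAlgEquiv.{0,0} ℂ)

/-- The algebra equivalence `MvPolynomial (Fin 2) ℂ ≃ₐ[ℂ] (ℂ[X])[Y]`,
sending `X 0 ↦ C X` (inner variable) and `X 1 ↦ X` (outer variable). -/
noncomputable def stmt4AuxE : MvPolynomial (Fin 2) ℂ ≃ₐ[ℂ] Polynomial (Polynomial ℂ) :=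
  (renameEquiv ℂ (Equiv.swap 0 1)).trans
    ((finSuccEquiv ℂ 1).trans (Polynomial.mapAlgEquiv stmt4AuxE2))

lemma stmt4AuxE2_X : stmt4AuxE2 (X 0) = Polynomial.X := by simp [stmt4AuxE2]

lemma stmt4AuxE_X1 : stmt4AuxE (X 1) = Polynomial.X := by
  simp [stmt4AuxE, finSuccEquiv_X_zero]

lemma stmt4AuxE_X0 : stmt4AuxE (X 0) = Polynomial.C Polynomial.X := by
  show (Polynomial.mapAlgEquiv stmt4AuxE2)
    ((finSuccEquiv ℂ 1) ((renameEquiv ℂ (Equiv.swap 0 1)) (X 0))) = _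
  rw [renameEquiv_apply, rename_X, Equiv.swap_apply_left,
    show (1 : Fin 2) = Fin.succ 0 from rfl, finSuccEquiv_X_succ]
  simp [stmt4AuxE2_X]

lemma stmt4AuxE_aeval0 (p : Polynomial ℂ) :
    stmt4AuxE (Polynomial.aeval (X 0) p) = Polynomial.C p := by
  rw [← Polynomial.aeval_algHom_apply, stmt4AuxE_X0,
    show ((Polynomial.C : Polynomial ℂ →+* Polynomial (Polynomial ℂ)) Polynomial.X) =
      (Polynomial.CAlgHom (R := ℂ)) Polynomial.X from rfl,
    Polynomial.aeval_algHom_apply, Polynomial.aeval_X_left_apply]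
  rfl

lemma stmt4AuxE_aeval1 (p : Polynomial ℂ) :
    stmt4AuxE (Polynomial.aeval (X 1) p) = p.map Polynomial.C := by
  rw [← Polynomial.aeval_algHom_apply, stmt4AuxE_X1]
  induction p using Polynomial.induction_on with
  | C a => simp
  | add p q hp hq => simp [hp, hq]
  | monomial n a ih => simp [pow_succ, ← mul_assoc]

/-- Transfer of span membership along an algebra equivalence. -/
lemma stmt4AuxTransfer {S T : Type*} [CommRing S] [CommRing T] [Algebra ℂ S] [Algebra ℂ T]
    (e : S ≃ₐ[ℂ] T) {x y z : S} :
    z ∈ Ideal.span ({x, y} : Set S) ↔ e z ∈ Ideal.span ({e x, e y} : Set T) := by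
  constructor
  · intro h
    obtain ⟨u, v, huv⟩ := Ideal.mem_span_pair.mp h
    exact Ideal.mem_span_pair.mpr ⟨e u, e v, by rw [← map_mul, ← map_mul, ← map_add, huv]⟩
  · intro h
    obtain ⟨u, v, huv⟩ := Ideal.mem_span_pair.mp h
    refine Ideal.mem_span_pair.mpr ⟨e.symm u, e.symm v, e.injective ?_⟩
    rw [map_add, map_mul, map_mul, AlgEquiv.apply_symm_apply, AlgEquiv.apply_symm_apply, huv]


/-- For nonzero `a, b ∈ ℂ[s]`, the intersection `⟨a(s), b(t)⟩ ∩ ℂ[s+t]`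
is a principal ideal with a unique monic generator `a ∙ b`.  We characterize a monic
polynomial `g` as being this generator by: for every `p ∈ ℂ[u]`, `p(s+t)` lies in the
ideal iff `g ∣ p`.  Then `lcm(a,b) ∙ q = lcm(a ∙ q, b ∙ q)` for nonzero `a, b, q`. -/
theorem stmt4 (a b q : Polynomial ℂ) (ha : a ≠ 0) (hb : b ≠ 0) (hq : q ≠ 0)
    (g₁ g₂ g₃ : Polynomial ℂ) (hm₁ : g₁.Monic) (hm₂ : g₂.Monic) (hm₃ : g₃.Monic)
    (hg₁ : ∀ p : Polynomial ℂ,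
      Polynomial.aeval (X 0 + X 1 : MvPolynomial (Fin 2) ℂ) p ∈
        Ideal.span ({Polynomial.aeval (X 0 : MvPolynomial (Fin 2) ℂ) (lcm a b),
          Polynomial.aeval (X 1 : MvPolynomial (Fin 2) ℂ) q} : Set (MvPolynomial (Fin 2) ℂ))
        ↔ g₁ ∣ p)
    (hg₂ : ∀ p : Polynomial ℂ,
      Polynomial.aeval (X 0 + X 1 : MvPolynomial (Fin 2) ℂ) p ∈
        Ideal.span ({Polynomial.aeval (X 0 : MvPolynomial (Fin 2) ℂ) a,
          Polynomial.aeval (X 1 : MvPolynomial (Fin 2) ℂ) q} : Set (MvPolynomial (Fin 2) ℂ))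
        ↔ g₂ ∣ p)
    (hg₃ : ∀ p : Polynomial ℂ,
      Polynomial.aeval (X 0 + X 1 : MvPolynomial (Fin 2) ℂ) p ∈
        Ideal.span ({Polynomial.aeval (X 0 : MvPolynomial (Fin 2) ℂ) b,
          Polynomial.aeval (X 1 : MvPolynomial (Fin 2) ℂ) q} : Set (MvPolynomial (Fin 2) ℂ))
        ↔ g₃ ∣ p) :
    g₁ = lcm g₂ g₃ := by
  classical
  -- span inclusions: ⟨L(s), q(t)⟩ ⊆ ⟨a(s), q(t)⟩ and ⊆ ⟨b(s), q(t)⟩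
  have hsub : ∀ r : Polynomial ℂ, r ∣ lcm a b →
      Ideal.span ({Polynomial.aeval (X 0 : MvPolynomial (Fin 2) ℂ) (lcm a b),
        Polynomial.aeval (X 1 : MvPolynomial (Fin 2) ℂ) q} : Set (MvPolynomial (Fin 2) ℂ)) ≤
      Ideal.span ({Polynomial.aeval (X 0 : MvPolynomial (Fin 2) ℂ) r,
        Polynomial.aeval (X 1 : MvPolynomial (Fin 2) ℂ) q} : Set (MvPolynomial (Fin 2) ℂ)) := by
    intro r hr
    apply Ideal.span_le.mpr
    rintro z (rfl | rfl)
    · obtain ⟨m, hm⟩ := hr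
      exact Ideal.mem_span_pair.mpr ⟨Polynomial.aeval (X 0) m, 0, by
        simp [hm, map_mul, mul_comm]⟩
    · exact Ideal.subset_span (by simp)
  have hd21 : g₂ ∣ g₁ := (hg₂ g₁).mp (hsub a (dvd_lcm_left a b) ((hg₁ g₁).mpr dvd_rfl))
  have hd31 : g₃ ∣ g₁ := (hg₃ g₁).mp (hsub b (dvd_lcm_right a b) ((hg₁ g₁).mpr dvd_rfl))
  have h1 : lcm g₂ g₃ ∣ g₁ := lcm_dvd hd21 hd31
  -- converse divisibility via the key lemma
  set P := lcm g₂ g₃ with hP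
  have hP2 := (hg₂ P).mpr (dvd_lcm_left g₂ g₃)
  have hP3 := (hg₃ P).mpr (dvd_lcm_right g₂ g₃)
  rw [stmt4AuxTransfer stmt4AuxE, stmt4AuxE_aeval0, stmt4AuxE_aeval1] at hP2 hP3
  have hmem := stmt4AuxKey a b q ha hq _ hP2 hP3
  have h2 : g₁ ∣ P := by
    apply (hg₁ P).mp
    rw [stmt4AuxTransfer stmt4AuxE, stmt4AuxE_aeval0, stmt4AuxE_aeval1]
    exact hmem
  -- both monic and associated
  have hP0 : P ≠ 0 := by
    intro h
    rcases (lcm_eq_zero_iff g₂ g₃).mp h with h' | h'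
    · exact hm₂.ne_zero h'
    · exact hm₃.ne_zero h'
  have hPm : P.Monic := by
    have := Polynomial.monic_normalize hP0
    rwa [hP, normalize_lcm] at this
  exact Polynomial.eq_of_monic_of_associated hm₁ hPm (associated_of_dvd_dvd h2 h1)
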